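/- Every weighted graph G on n ≥ 3 vertices admits a partition of its vertex set into three nonempty parts (X₁, X₂, X₃) such that the total weight of edges between distinct parts satisfies w(X₁,X₂,X₃) ≥ (2/3)·w(G) + d_w(G)/3, where d_w(G) = 2w(G)/n. -/

import Mathlib

open Finset

/-- Total weight of the graph: half the sum of `w u v` over ordered pairs. -/
noncomputable def totalW {V : Type} [Fintype V] (w : V → V → ℝ) : ℝ := (∑ u, ∑ v, w u v) / 2

/-- Weight of the cut between `X` and `Y`. -/
noncomputable def cutW {V : Type} (w : V → V → ℝ) (X Y : Finset V) : ℝ := ∑ u ∈ X, ∑ v ∈ Y, w u v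

/-- Weight of the edges inside `S`. -/
noncomputable def insideW {V : Type} (w : V → V → ℝ) (S : Finset V) : ℝ := (∑ u ∈ S, ∑ v ∈ S, w u v) / 2

/-- Weighted degree of a vertex. -/
noncomputable def wdeg {V : Type} [Fintype V] (w : V → V → ℝ) (v : V) : ℝ := ∑ u, w v u

/-- Maximum weighted degree. -/
noncomputable def maxDeg {V : Type} [Fintype V] (w : V → V → ℝ) : ℝ := ⨆ v, wdeg w v

/-- Weight from `v` into the set `S`. -/
noncomputable def wS {V : Type} (w : V → V → ℝ) (S : Finset V) (v : V) : ℝ := ∑ x ∈ S, w v x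

/-- Total cross-part weight of a `k`-partition. -/
noncomputable def kcutW {V : Type} (w : V → V → ℝ) {k : ℕ} (X : Fin k → Finset V) : ℝ :=
  (∑ i, ∑ j, if i = j then 0 else cutW w (X i) (X j)) / 2

/-- `X` is a partition of `V` into `k` nonempty pairwise disjoint parts. -/
def IsPartition {V : Type} {k : ℕ} (X : Fin k → Finset V) : Prop :=
  (∀ i, (X i).Nonempty) ∧ (∀ i j, i ≠ j → Disjoint (X i) (X j)) ∧ (∀ v, ∃ i, v ∈ X i)

section Aux

set_option linter.unusedSectionVars false

variable {V : Type} [Fintype V] [DecidableEq V]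

private lemma exists_perm_two {u v x y : V} (huv : u ≠ v) (hxy : x ≠ y) :
    ∃ τ : Equiv.Perm V, τ u = x ∧ τ v = y := by
  refine ⟨(Equiv.swap u x).trans (Equiv.swap ((Equiv.swap u x) v) y), ?_, ?_⟩
  · simp only [Equiv.trans_apply, Equiv.swap_apply_left]
    apply Equiv.swap_apply_of_ne_of_ne
    · intro h
      exact huv ((Equiv.swap u x).injective (by simp [← h]))
    · exact hxy
  · simp [Equiv.trans_apply]

private lemma fiber_card_eq (u v x y : V) (huv : u ≠ v) (hxy : x ≠ y) :
    (univ.filter fun σ : Equiv.Perm V => (σ u, σ v) = (x, y)).card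
      = (univ.filter fun σ : Equiv.Perm V => (σ u, σ v) = (u, v)).card := by
  obtain ⟨τ, hτu, hτv⟩ := exists_perm_two huv hxy
  refine Finset.card_bij' (fun σ _ => τ⁻¹ * σ) (fun σ _ => τ * σ) ?_ ?_ ?_ ?_
  · intro σ hσ
    simp only [mem_filter, mem_univ, true_and, Prod.mk.injEq] at hσ ⊢
    obtain ⟨h1, h2⟩ := hσ
    exact ⟨by simp [Equiv.Perm.mul_apply, h1, ← hτu], by simp [Equiv.Perm.mul_apply, h2, ← hτv]⟩
  · intro σ hσ
    simp only [mem_filter, mem_univ, true_and, Prod.mk.injEq] at hσ ⊢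
    obtain ⟨h1, h2⟩ := hσ
    exact ⟨by simp [Equiv.Perm.mul_apply, h1, hτu], by simp [Equiv.Perm.mul_apply, h2, hτv]⟩
  · intro σ _; simp [← mul_assoc]
  · intro σ _; simp [← mul_assoc]

private lemma fiber_total (u v : V) (huv : u ≠ v) :
    (Fintype.card V * Fintype.card V - Fintype.card V) *
      (univ.filter fun σ : Equiv.Perm V => (σ u, σ v) = (u, v)).card
      = Nat.factorial (Fintype.card V) := by
  have hmaps : ∀ σ : Equiv.Perm V, σ ∈ (univ : Finset (Equiv.Perm V)) →
      (σ u, σ v) ∈ (univ : Finset V).offDiag := by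
    intro σ _
    exact Finset.mem_offDiag.2 ⟨mem_univ _, mem_univ _, fun h => huv (σ.injective h)⟩
  have h := Finset.card_eq_sum_card_fiberwise hmaps
  rw [Finset.card_univ, Fintype.card_perm] at h
  have h2 : ∀ p ∈ (univ : Finset V).offDiag,
      (univ.filter fun σ : Equiv.Perm V => (σ u, σ v) = p).card
        = (univ.filter fun σ : Equiv.Perm V => (σ u, σ v) = (u, v)).card := by
    intro p hp
    obtain ⟨-, -, hne⟩ := Finset.mem_offDiag.1 hp
    exact fiber_card_eq u v p.1 p.2 huv hne
  rw [Finset.sum_congr rfl h2, Finset.sum_const, smul_eq_mul, Finset.offDiag_card,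
    Finset.card_univ] at h
  omega

private lemma offdiag_sum (w : V → V → ℝ) (hdiag : ∀ a, w a a = 0) :
    ∑ p ∈ (univ : Finset V).offDiag, w p.1 p.2 = ∑ x, ∑ y, w x y := by
  rw [← Finset.sum_product (f := fun p : V × V => w p.1 p.2)]
  rw [← Finset.sum_filter_add_sum_filter_not (univ ×ˢ univ) (fun p : V × V => p.1 ≠ p.2)]
  have h0 : ∑ p ∈ (univ ×ˢ univ : Finset (V × V)).filter (fun p => ¬ p.1 ≠ p.2), w p.1 p.2 = 0 := by
    apply Finset.sum_eq_zero
    intro p hp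
    obtain ⟨-, hp⟩ := Finset.mem_filter.1 hp
    rw [not_ne_iff] at hp
    rw [hp, hdiag]
  rw [h0, add_zero]
  refine Finset.sum_congr ?_ (fun _ _ => rfl)
  ext p
  simp [Finset.mem_offDiag]

private lemma sum_perm_pair (w : V → V → ℝ) (hdiag : ∀ a, w a a = 0) {u v : V} (huv : u ≠ v) :
    ∑ σ : Equiv.Perm V, w (σ u) (σ v)
      = ((univ.filter fun σ : Equiv.Perm V => (σ u, σ v) = (u, v)).card : ℝ)
          * ∑ x, ∑ y, w x y := by
  have hmaps : ∀ σ : Equiv.Perm V, σ ∈ (univ : Finset (Equiv.Perm V)) →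
      (σ u, σ v) ∈ (univ : Finset V).offDiag := by
    intro σ _
    exact Finset.mem_offDiag.2 ⟨mem_univ _, mem_univ _, fun h => huv (σ.injective h)⟩
  rw [← Finset.sum_fiberwise_of_maps_to hmaps (fun σ => w (σ u) (σ v))]
  have h1 : ∀ p ∈ (univ : Finset V).offDiag,
      ∑ σ ∈ univ.filter (fun σ : Equiv.Perm V => (σ u, σ v) = p), w (σ u) (σ v)
        = ((univ.filter fun σ : Equiv.Perm V => (σ u, σ v) = (u, v)).card : ℝ) * w p.1 p.2 := by
    intro p hp
    obtain ⟨-, -, hne⟩ := Finset.mem_offDiag.1 hp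
    have hc : ∀ σ ∈ univ.filter (fun σ : Equiv.Perm V => (σ u, σ v) = p),
        w (σ u) (σ v) = w p.1 p.2 := by
      intro σ hσ
      obtain ⟨-, hσ⟩ := Finset.mem_filter.1 hσ
      rw [← hσ]
    rw [Finset.sum_congr rfl hc, Finset.sum_const, nsmul_eq_mul,
      fiber_card_eq u v p.1 p.2 huv hne]
  rw [Finset.sum_congr rfl h1, ← Finset.mul_sum, offdiag_sum w hdiag]

private lemma sum_perm_pair' (w : V → V → ℝ) (hdiag : ∀ a, w a a = 0)
    (hcard : 3 ≤ Fintype.card V) {u v : V} (huv : u ≠ v) :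
    ∑ σ : Equiv.Perm V, w (σ u) (σ v)
      = ((Nat.factorial (Fintype.card V) : ℝ)
          / ((Fintype.card V * Fintype.card V - Fintype.card V : ℕ) : ℝ))
          * ∑ x, ∑ y, w x y := by
  rw [sum_perm_pair w hdiag huv]
  congr 1
  have h := fiber_total u v huv
  have hpos : 0 < Fintype.card V * Fintype.card V - Fintype.card V := by
    have : 3 * Fintype.card V ≤ Fintype.card V * Fintype.card V :=
      Nat.mul_le_mul_right _ hcard
    omega
  rw [eq_div_iff (by exact_mod_cast hpos.ne')]
  have h2 : (univ.filter fun σ : Equiv.Perm V => (σ u, σ v) = (u, v)).card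
      * (Fintype.card V * Fintype.card V - Fintype.card V) = Nat.factorial (Fintype.card V) := by
    rw [mul_comm]; exact h
  exact_mod_cast h2

private lemma balanced_ineq (n : ℕ) :
    n * n ≤ 3 * ((n/3) * ((n+1)/3) + (n/3) * ((n+2)/3) + ((n+1)/3) * ((n+2)/3)) + 1 := by
  have hr : n % 3 = 0 ∨ n % 3 = 1 ∨ n % 3 = 2 := by omega
  set k := n / 3 with hk
  rcases hr with h | h | h
  · have e1 : n = 3 * k := by omega
    have e2 : (n+1)/3 = k := by omega
    have e3 : (n+2)/3 = k := by omega
    rw [e2, e3, e1]; nlinarith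
  · have e1 : n = 3 * k + 1 := by omega
    have e2 : (n+1)/3 = k := by omega
    have e3 : (n+2)/3 = k + 1 := by omega
    rw [e2, e3, e1]; nlinarith
  · have e1 : n = 3 * k + 2 := by omega
    have e2 : (n+1)/3 = k + 1 := by omega
    have e3 : (n+2)/3 = k + 1 := by omega
    rw [e2, e3, e1]; nlinarith

end Aux

theorem stmt4 (V : Type) [Fintype V] [DecidableEq V] (w : V → V → ℝ)
    (hcard : 3 ≤ Fintype.card V)
    (hsym : ∀ u v, w u v = w v u) (hnn : ∀ u v, 0 ≤ w u v) (hdiag : ∀ v, w v v = 0) :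
    ∃ X₁ X₂ X₃ : Finset V, X₁.Nonempty ∧ X₂.Nonempty ∧ X₃.Nonempty ∧
      Disjoint X₁ X₂ ∧ Disjoint X₁ X₃ ∧ Disjoint X₂ X₃ ∧ X₁ ∪ X₂ ∪ X₃ = Finset.univ ∧
      cutW w X₁ X₂ + cutW w X₁ X₃ + cutW w X₂ X₃ ≥
        2 / 3 * totalW w + (2 * totalW w / (Fintype.card V : ℝ)) / 3 := by
  classical
  set n := Fintype.card V with hn
  set T : ℝ := ∑ x, ∑ y, w x y with hTdef
  have hT : 0 ≤ T := Finset.sum_nonneg fun x _ => Finset.sum_nonneg fun y _ => hnn x y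
  have htot : totalW w = T / 2 := rfl
  -- build a balanced partition A₁, A₂, A₃ of univ
  set a₁ := n / 3 with ha₁d
  set a₂ := (n + 1) / 3 with ha₂d
  set a₃ := (n + 2) / 3 with ha₃d
  have hsumabc : a₁ + a₂ + a₃ = n := by omega
  obtain ⟨A₁, hA₁u, hA₁⟩ := Finset.exists_subset_card_eq
    (show a₁ ≤ (univ : Finset V).card by rw [Finset.card_univ, ← hn]; omega)
  obtain ⟨A₂, hA₂u, hA₂⟩ := Finset.exists_subset_card_eq
    (show a₂ ≤ ((univ : Finset V) \ A₁).card by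
      rw [Finset.card_sdiff, Finset.inter_univ, Finset.card_univ, ← hn, hA₁]; omega)
  set A₃ : Finset V := univ \ (A₁ ∪ A₂) with hA₃d
  have d₁₂ : Disjoint A₁ A₂ := by
    rw [Finset.disjoint_left]
    intro x hx1 hx2
    exact (Finset.mem_sdiff.1 (hA₂u hx2)).2 hx1
  have d₁₃ : Disjoint A₁ A₃ := by
    rw [Finset.disjoint_left]
    intro x hx1 hx3
    exact (Finset.mem_sdiff.1 hx3).2 (Finset.mem_union_left _ hx1)
  have d₂₃ : Disjoint A₂ A₃ := by
    rw [Finset.disjoint_left]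
    intro x hx2 hx3
    exact (Finset.mem_sdiff.1 hx3).2 (Finset.mem_union_right _ hx2)
  have hunion : A₁ ∪ A₂ ∪ A₃ = univ := Finset.union_sdiff_of_subset (Finset.subset_univ _)
  have hA₃ : A₃.card = a₃ := by
    rw [hA₃d, Finset.card_sdiff, Finset.inter_univ, Finset.card_union_of_disjoint d₁₂,
      Finset.card_univ, ← hn, hA₁, hA₂]
    omega
  -- the averaging constant
  set c : ℝ := ((Nat.factorial n : ℝ) / ((n * n - n : ℕ) : ℝ)) with hcdef
  -- sum of cuts over all permutations
  have key : ∀ A B : Finset V, Disjoint A B →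
      ∑ σ : Equiv.Perm V, cutW w (A.image σ) (B.image σ)
        = (A.card : ℝ) * (B.card : ℝ) * (c * T) := by
    intro A B hAB
    have h1 : ∀ σ : Equiv.Perm V,
        cutW w (A.image σ) (B.image σ) = ∑ u ∈ A, ∑ v ∈ B, w (σ u) (σ v) := by
      intro σ
      unfold cutW
      rw [Finset.sum_image (fun x _ y _ h => σ.injective h)]
      exact Finset.sum_congr rfl fun u _ =>
        Finset.sum_image (fun x _ y _ h => σ.injective h)
    calc ∑ σ : Equiv.Perm V, cutW w (A.image σ) (B.image σ)
        = ∑ σ : Equiv.Perm V, ∑ u ∈ A, ∑ v ∈ B, w (σ u) (σ v) :=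
          Finset.sum_congr rfl fun σ _ => h1 σ
      _ = ∑ u ∈ A, ∑ σ : Equiv.Perm V, ∑ v ∈ B, w (σ u) (σ v) := Finset.sum_comm
      _ = ∑ u ∈ A, ∑ v ∈ B, ∑ σ : Equiv.Perm V, w (σ u) (σ v) :=
          Finset.sum_congr rfl fun u _ => Finset.sum_comm
      _ = ∑ u ∈ A, ∑ v ∈ B, c * T := by
          refine Finset.sum_congr rfl fun u hu => Finset.sum_congr rfl fun v hv => ?_
          have huv : u ≠ v := fun h => Finset.disjoint_left.1 hAB hu (h ▸ hv)
          exact sum_perm_pair' w hdiag hcard huv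
      _ = (A.card : ℝ) * (B.card : ℝ) * (c * T) := by
          rw [Finset.sum_const, Finset.sum_const, nsmul_eq_mul, nsmul_eq_mul]
          ring
  -- total over permutations
  have total : ∑ σ : Equiv.Perm V,
      (cutW w (A₁.image σ) (A₂.image σ) + cutW w (A₁.image σ) (A₃.image σ)
        + cutW w (A₂.image σ) (A₃.image σ))
      = ((a₁ * a₂ + a₁ * a₃ + a₂ * a₃ : ℕ) : ℝ) * (c * T) := by
    rw [Finset.sum_add_distrib, Finset.sum_add_distrib, key A₁ A₂ d₁₂, key A₁ A₃ d₁₃,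
      key A₂ A₃ d₂₃, hA₁, hA₂, hA₃]
    push_cast
    ring
  -- the bound
  set B₀ : ℝ := 2 / 3 * totalW w + (2 * totalW w / (n : ℝ)) / 3 with hB₀def
  have hnR : (0:ℝ) < (n : ℝ) := by
    have : 0 < n := by omega
    exact_mod_cast this
  have hDn : ((n * n - n : ℕ) : ℝ) = (n : ℝ) * (n : ℝ) - (n : ℝ) := by
    have : n ≤ n * n := Nat.le_mul_of_pos_left n (by omega)
    push_cast [Nat.cast_sub this]
    ring
  have hDpos : (0:ℝ) < ((n * n - n : ℕ) : ℝ) := by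
    rw [hDn]; nlinarith [hnR, show (3:ℝ) ≤ (n:ℝ) by exact_mod_cast hcard]
  have hFpos : (0:ℝ) < (Nat.factorial n : ℝ) := by exact_mod_cast Nat.factorial_pos n
  have hP : ((n : ℝ) * n) ≤ 3 * ((a₁ * a₂ + a₁ * a₃ + a₂ * a₃ : ℕ) : ℝ) + 1 := by
    exact_mod_cast balanced_ineq n
  have havg : (Fintype.card (Equiv.Perm V) : ℝ) * B₀
      ≤ ((a₁ * a₂ + a₁ * a₃ + a₂ * a₃ : ℕ) : ℝ) * (c * T) := by
    rw [Fintype.card_perm, ← hn, hB₀def, htot, hcdef]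
    have h3n : (0:ℝ) < 3 * (n:ℝ) := by linarith
    have lhs_eq : ((Nat.factorial n : ℝ)) * (2 / 3 * (T / 2) + (2 * (T / 2) / (n : ℝ)) / 3)
        = ((Nat.factorial n : ℝ) * T * ((n:ℝ) + 1)) / (3 * (n:ℝ)) := by
      field_simp
    have rhs_eq : ((a₁ * a₂ + a₁ * a₃ + a₂ * a₃ : ℕ) : ℝ)
          * ((Nat.factorial n : ℝ) / ((n * n - n : ℕ) : ℝ) * T)
        = (((a₁ * a₂ + a₁ * a₃ + a₂ * a₃ : ℕ) : ℝ) * ((Nat.factorial n : ℝ) * T))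
            / ((n * n - n : ℕ) : ℝ) := by
      ring
    rw [lhs_eq, rhs_eq, div_le_div_iff₀ h3n hDpos, hDn]
    nlinarith [mul_le_mul_of_nonneg_right hP (mul_nonneg (mul_nonneg hFpos.le hT) hnR.le),
      mul_nonneg (mul_nonneg hFpos.le hT) hnR.le]
  -- extract a good permutation
  have hne : (univ : Finset (Equiv.Perm V)).Nonempty := univ_nonempty
  obtain ⟨σ, -, hσ⟩ := Finset.exists_le_of_sum_le (f := fun _ : Equiv.Perm V => B₀)
    (g := fun σ : Equiv.Perm V =>
      cutW w (A₁.image σ) (A₂.image σ) + cutW w (A₁.image σ) (A₃.image σ)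
        + cutW w (A₂.image σ) (A₃.image σ)) hne
    (by rw [Finset.sum_const, nsmul_eq_mul, ← Finset.card_univ] at *
        rw [total]
        exact_mod_cast havg)
  refine ⟨A₁.image σ, A₂.image σ, A₃.image σ, ?_, ?_, ?_, ?_, ?_, ?_, ?_, ?_⟩
  · exact (Finset.card_pos.1 (by rw [hA₁]; omega)).image σ
  · exact (Finset.card_pos.1 (by rw [hA₂]; omega)).image σ
  · exact (Finset.card_pos.1 (by rw [hA₃]; omega)).image σ
  · exact (Finset.disjoint_image σ.injective).2 d₁₂
  · exact (Finset.disjoint_image σ.injective).2 d₁₃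
  · exact (Finset.disjoint_image σ.injective).2 d₂₃
  · rw [← Finset.image_union, ← Finset.image_union, hunion]
    simp
  · exact hσ
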